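/- For every real t ≠ 0, the moment-generating function of distance on L(2;1) = ℝP³ satisfies M(2,t) = (4/(π(4+t²))) · ( 2(e^{tπ/2} − 1)/t + t · e^{tπ/2} ). -/

import Mathlib

open MeasureTheory

/-- The moment-generating function of distance on the homogeneous lens space `L(n;1)`,
expressed as an explicit integral over a fundamental domain in join coordinates. -/
noncomputable def mgfM (n : ℕ) (t : ℝ) : ℝ :=
  ((n : ℝ) ^ 2 / (2 * Real.pi ^ 2)) *
    ∫ θ₂ in (-(Real.pi / n))..(Real.pi / n),
      ∫ θ₁ in (-(Real.pi / n))..(Real.pi / n),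
        ∫ η in (0 : ℝ)..(Real.pi / 2),
          Real.exp (t * Real.arccos (Real.cos θ₁ * Real.cos η)) * Real.cos η * Real.sin η

open Real Set intervalIntegral Filter in
noncomputable def Iinn (t θ : ℝ) : ℝ :=
  ∫ η in (0 : ℝ)..(Real.pi / 2),
    Real.exp (t * Real.arccos (Real.cos θ * Real.cos η)) * Real.cos η * Real.sin η

lemma Iinn_cont (t : ℝ) : Continuous (Iinn t) := by
  apply intervalIntegral.continuous_parametric_intervalIntegral_of_continuous'
  have : Continuous fun p : ℝ × ℝ =>
      Real.exp (t * Real.arccos (Real.cos p.1 * Real.cos p.2)) * Real.cos p.2 * Real.sin p.2 :=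
    ((Real.continuous_exp.comp ((continuous_const.mul (Real.continuous_arccos.comp
      ((Real.continuous_cos.comp continuous_fst).mul
        (Real.continuous_cos.comp continuous_snd)))))).mul
      (Real.continuous_cos.comp continuous_snd)).mul (Real.continuous_sin.comp continuous_snd)
  exact this

lemma inner_eq (t : ℝ) {θ : ℝ} (hθ : θ ∈ Set.Ioo 0 (Real.pi / 2)) :
    Iinn t θ =
      ((Real.exp (t * (Real.pi / 2)) - Real.exp (t * θ)
          - t * Real.exp (t * θ) * Real.sin θ * Real.cos θ) / (Real.cos θ) ^ 2
        + 2 * Real.exp (t * θ)) / (t ^ 2 + 4) := by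
  have hπ := Real.pi_pos
  have hc : 0 < Real.cos θ :=
    Real.cos_pos_of_mem_Ioo ⟨by linarith [hθ.1], hθ.2⟩
  have hc1 : Real.cos θ < 1 := by
    have := Real.cos_lt_cos_of_nonneg_of_le_pi (le_refl 0) (by linarith [hθ.2]) hθ.1
    simpa using this
  have ht4 : (t ^ 2 + 4 : ℝ) ≠ 0 := by positivity
  set F : ℝ → ℝ := fun η =>
    Real.exp (t * Real.arccos (Real.cos θ * Real.cos η))
      * (t * Real.sin (2 * Real.arccos (Real.cos θ * Real.cos η))
         - 2 * Real.cos (2 * Real.arccos (Real.cos θ * Real.cos η)))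
      / (2 * (t ^ 2 + 4)) / (Real.cos θ) ^ 2 with hF
  have hderiv : ∀ η ∈ Set.uIcc (0 : ℝ) (Real.pi / 2), HasDerivAt F
      (Real.exp (t * Real.arccos (Real.cos θ * Real.cos η)) * Real.cos η * Real.sin η) η := by
    intro η hη
    rw [Set.uIcc_of_le (by linarith : (0:ℝ) ≤ Real.pi / 2)] at hη
    have hcη0 : 0 ≤ Real.cos η := Real.cos_nonneg_of_mem_Icc ⟨by linarith [hη.1], hη.2⟩
    have hcη1 : Real.cos η ≤ 1 := Real.cos_le_one η
    set x : ℝ := Real.cos θ * Real.cos η with hx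
    have hx0 : 0 ≤ x := mul_nonneg hc.le hcη0
    have hxlt : x < 1 := lt_of_le_of_lt (by nlinarith : x ≤ Real.cos θ) hc1
    have hxn : x ≠ -1 := by linarith
    have hx1 : x ≠ 1 := ne_of_lt hxlt
    have hs : 0 < 1 - x ^ 2 := by nlinarith
    have hsq : Real.sqrt (1 - x ^ 2) ^ 2 = 1 - x ^ 2 := Real.sq_sqrt hs.le
    have hs0 : Real.sqrt (1 - x ^ 2) ≠ 0 := by positivity
    have h1 : HasDerivAt (fun η => Real.cos θ * Real.cos η)
        (Real.cos θ * (-Real.sin η)) η := (Real.hasDerivAt_cos η).const_mul _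
    have h2 : HasDerivAt Real.arccos (-(1 / Real.sqrt (1 - x ^ 2))) x :=
      Real.hasDerivAt_arccos hxn hx1
    have hd : HasDerivAt (fun η => Real.arccos (Real.cos θ * Real.cos η))
        (-(1 / Real.sqrt (1 - x ^ 2)) * (Real.cos θ * (-Real.sin η))) η :=
        HasDerivAt.comp (h₂ := Real.arccos) (h := fun η => Real.cos θ * Real.cos η) η h2 h1
    set d' : ℝ := -(1 / Real.sqrt (1 - x ^ 2)) * (Real.cos θ * (-Real.sin η)) with hd'
    set dv : ℝ := Real.arccos x with hdv
    have he : HasDerivAt (fun η => Real.exp (t * Real.arccos (Real.cos θ * Real.cos η)))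
        (Real.exp (t * dv) * (t * d')) η := (hd.const_mul t).exp
    have hsin : HasDerivAt (fun η => Real.sin (2 * Real.arccos (Real.cos θ * Real.cos η)))
        (Real.cos (2 * dv) * (2 * d')) η := (hd.const_mul 2).sin
    have hcos : HasDerivAt (fun η => Real.cos (2 * Real.arccos (Real.cos θ * Real.cos η)))
        (-Real.sin (2 * dv) * (2 * d')) η := (hd.const_mul 2).cos
    have hall := (((he.mul ((hsin.const_mul t).sub (hcos.const_mul 2))).div_const
      (2 * (t ^ 2 + 4))).div_const ((Real.cos θ) ^ 2))
    refine hall.congr_deriv ?_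
    simp only [Pi.sub_apply]
    rw [← hx, ← hdv]
    have hsd : Real.sin dv = Real.sqrt (1 - x ^ 2) := Real.sin_arccos x
    have hcd : Real.cos dv = x := Real.cos_arccos (by linarith) hxlt.le
    rw [Real.sin_two_mul, Real.cos_two_mul, hsd, hcd, hd', hx]
    have hs0' : Real.sqrt (1 - Real.cos θ ^ 2 * Real.cos η ^ 2) ≠ 0 := by
      rw [← mul_pow, ← hx]; exact hs0
    field_simp
    nlinarith [hsq, Real.exp_pos (t * dv), sq_nonneg (Real.sqrt (1 - x^2))]
  have hint : IntervalIntegrable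
      (fun η => Real.exp (t * Real.arccos (Real.cos θ * Real.cos η)) * Real.cos η * Real.sin η)
      volume 0 (Real.pi / 2) := by
    apply Continuous.intervalIntegrable
    exact ((Real.continuous_exp.comp (continuous_const.mul (Real.continuous_arccos.comp
      (continuous_const.mul Real.continuous_cos)))).mul Real.continuous_cos).mul
      Real.continuous_sin
  have := intervalIntegral.integral_eq_sub_of_hasDerivAt hderiv hint
  rw [Iinn, this, hF]
  simp only [Real.cos_pi_div_two, mul_zero, Real.arccos_zero, Real.cos_zero, mul_one]
  rw [Real.arccos_cos hθ.1.le (by linarith [hθ.2]),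
    show (2 : ℝ) * (Real.pi / 2) = Real.pi by ring, Real.sin_pi, Real.cos_pi,
    Real.sin_two_mul, Real.cos_two_mul]
  field_simp
  ring

lemma outer_eq (t : ℝ) (ht : t ≠ 0) :
    ∫ θ in (0 : ℝ)..(Real.pi / 2), Iinn t θ =
      (t * Real.exp (t * (Real.pi / 2)) + 2 * Real.exp (t * (Real.pi / 2)) / t) / (t ^ 2 + 4)
        - (2 / t) / (t ^ 2 + 4) := by
  have hπ := Real.pi_pos
  have ht4 : (t ^ 2 + 4 : ℝ) ≠ 0 := by positivity
  set E : ℝ := Real.exp (t * (Real.pi / 2)) with hE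
  set a : ℝ := Real.pi / 2 with ha
  set Φ : ℝ → ℝ := fun θ =>
    ((E - Real.exp (t * θ)) * (Real.sin θ / Real.cos θ) + 2 * Real.exp (t * θ) / t)
      / (t ^ 2 + 4) with hΦ
  have hexp : ∀ y : ℝ, HasDerivAt (fun y => Real.exp (t * y)) (Real.exp (t * y) * t) y := by
    intro y
    simpa using ((hasDerivAt_id y).const_mul t).exp
  have hderiv : ∀ θ ∈ Set.Ioo (0 : ℝ) a, HasDerivAt Φ (Iinn t θ) θ := by
    intro θ hθ
    have hc : 0 < Real.cos θ := Real.cos_pos_of_mem_Ioo ⟨by linarith [hθ.1], hθ.2⟩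
    rw [inner_eq t hθ]
    have h2 : HasDerivAt (fun θ => Real.sin θ / Real.cos θ) (1 / Real.cos θ ^ 2) θ := by
      have := (Real.hasDerivAt_sin θ).div (Real.hasDerivAt_cos θ) hc.ne'
      refine this.congr_deriv ?_
      have hsc := Real.sin_sq_add_cos_sq θ
      field_simp
      nlinarith [hsc]
    have hEe : HasDerivAt (fun θ => E - Real.exp (t * θ)) (-(Real.exp (t * θ) * t)) θ :=
      (hexp θ).const_sub E
    have hall := (((hEe.mul h2).add (((hexp θ).const_mul 2).div_const t)).div_const (t ^ 2 + 4))
    refine hall.congr_deriv ?_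
    rw [hE, ha]
    field_simp
    ring
  have hint : IntervalIntegrable (Iinn t) volume 0 a :=
    (Iinn_cont t).intervalIntegrable 0 a
  have hb : Filter.Tendsto Φ (nhdsWithin a (Set.Iio a))
      (nhds ((t * E + 2 * E / t) / (t ^ 2 + 4))) := by
    have hlt : Set.Iio a ⊆ {a}ᶜ := fun y hy => ne_of_lt hy
    have hs1 : Filter.Tendsto (fun θ => (Real.exp (t * θ) - E) / (θ - a))
        (nhdsWithin a (Set.Iio a)) (nhds (E * t)) := by
      have := (hasDerivAt_iff_tendsto_slope.mp (hexp a)).mono_left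
        (nhdsWithin_mono _ hlt)
      simpa [slope_fun_def_field, hE] using this
    have hs2 : Filter.Tendsto (fun θ => Real.cos θ / (θ - a))
        (nhdsWithin a (Set.Iio a)) (nhds (-1)) := by
      have := (hasDerivAt_iff_tendsto_slope.mp (Real.hasDerivAt_cos a)).mono_left
        (nhdsWithin_mono _ hlt)
      simpa [slope_fun_def_field, ha, Real.cos_pi_div_two, Real.sin_pi_div_two] using this
    have hsin : Filter.Tendsto Real.sin (nhdsWithin a (Set.Iio a)) (nhds 1) := by
      have : Filter.Tendsto Real.sin (nhds a) (nhds (Real.sin a)) :=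
        Real.continuous_sin.continuousAt
      rw [ha, Real.sin_pi_div_two] at this
      exact this.mono_left nhdsWithin_le_nhds
    have hdiv := ((hs1.div hs2 (by norm_num)).neg).mul hsin
    have htan : Filter.Tendsto (fun θ => (E - Real.exp (t * θ)) * (Real.sin θ / Real.cos θ))
        (nhdsWithin a (Set.Iio a)) (nhds (t * E)) := by
      have hmem : Set.Ioo (0 : ℝ) a ∈ nhdsWithin a (Set.Iio a) :=
        Ioo_mem_nhdsLT_of_mem ⟨by linarith, le_refl a⟩
      refine Filter.Tendsto.congr' ?_ (by convert hdiv using 2; ring)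
      filter_upwards [hmem] with θ hθ
      have hc : 0 < Real.cos θ := Real.cos_pos_of_mem_Ioo ⟨by linarith [hθ.1], hθ.2⟩
      have hne : θ - a ≠ 0 := sub_ne_zero.mpr (ne_of_lt hθ.2)
      simp only [Pi.div_apply]
      field_simp
      ring
    have hrest : Filter.Tendsto (fun θ => 2 * Real.exp (t * θ) / t)
        (nhdsWithin a (Set.Iio a)) (nhds (2 * E / t)) := by
      have : Filter.Tendsto (fun θ => 2 * Real.exp (t * θ) / t) (nhds a)
          (nhds (2 * Real.exp (t * a) / t)) :=
        ((continuous_const.mul (Real.continuous_exp.comp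
          (continuous_const.mul continuous_id))).div_const t).continuousAt
      exact this.mono_left nhdsWithin_le_nhds
    exact (htan.add hrest).div_const (t ^ 2 + 4)
  have haa : Filter.Tendsto Φ (nhdsWithin 0 (Set.Ioi 0)) (nhds ((2 / t) / (t ^ 2 + 4))) := by
    have : Filter.Tendsto Φ (nhds 0) (nhds (Φ 0)) := by
      apply ContinuousAt.tendsto
      apply ContinuousAt.div_const
      apply ContinuousAt.add
      · exact (continuousAt_const.sub ((Real.continuous_exp.comp
          (continuous_const.mul continuous_id)).continuousAt)).mul
          ((Real.continuous_sin.continuousAt).div (Real.continuous_cos.continuousAt)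
            (by norm_num [Real.cos_zero]))
      · exact ((continuous_const.mul (Real.continuous_exp.comp
          (continuous_const.mul continuous_id))).div_const t).continuousAt
    have h0 : Φ 0 = (2 / t) / (t ^ 2 + 4) := by
      simp [hΦ, Real.sin_zero, Real.cos_zero]
    rw [h0] at this
    exact this.mono_left nhdsWithin_le_nhds
  exact intervalIntegral.integral_eq_sub_of_hasDerivAt_of_tendsto (by linarith) hderiv hint
    haa hb

theorem mgf_formula_RP3 (t : ℝ) (ht : t ≠ 0) :
    mgfM 2 t =
      (4 / (Real.pi * (4 + t ^ 2))) *
        ( 2 * (Real.exp (t * Real.pi / 2) - 1) / t + t * Real.exp (t * Real.pi / 2) ) := by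
  have hπ := Real.pi_pos
  have ht4 : (t ^ 2 + 4 : ℝ) ≠ 0 := by positivity
  have hIi : ∀ a b : ℝ, IntervalIntegrable (Iinn t) volume a b :=
    fun a b => (Iinn_cont t).intervalIntegrable a b
  have hsplit := intervalIntegral.integral_add_adjacent_intervals
    (hIi (-(Real.pi / 2)) 0) (hIi 0 (Real.pi / 2))
  have hneg : (∫ x in (0 : ℝ)..(Real.pi / 2), Iinn t (-x))
      = ∫ x in (-(Real.pi / 2))..(0 : ℝ), Iinn t x := by
    simpa using intervalIntegral.integral_comp_neg (a := (0:ℝ)) (b := Real.pi / 2)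
      (fun x => Iinn t x)
  have heven : (∫ x in (0 : ℝ)..(Real.pi / 2), Iinn t (-x))
      = ∫ x in (0 : ℝ)..(Real.pi / 2), Iinn t x := by
    simp only [Iinn, Real.cos_neg]
  have hK : (∫ x in (-(Real.pi / 2))..(Real.pi / 2), Iinn t x)
      = 2 * ∫ x in (0 : ℝ)..(Real.pi / 2), Iinn t x := by
    rw [← hsplit, ← hneg, heven]; ring
  have hbody : (fun θ₁ : ℝ => ∫ η in (0 : ℝ)..(Real.pi / 2),
      Real.exp (t * Real.arccos (Real.cos θ₁ * Real.cos η)) * Real.cos η * Real.sin η)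
      = Iinn t := rfl
  have hmgf : mgfM 2 t
      = (4 / (2 * Real.pi ^ 2)) *
        (Real.pi * ∫ x in (-(Real.pi / 2))..(Real.pi / 2), Iinn t x) := by
    rw [mgfM]
    norm_num [hbody]
  rw [hmgf, hK, outer_eq t ht]
  rw [show t * (Real.pi / 2) = t * Real.pi / 2 by ring]
  have h4t : (4 + t ^ 2 : ℝ) ≠ 0 := by positivity
  field_simp
  ring
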